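/- Let N ≥ 1, let α : ℝ → (Fin N → Fin N → ℝ) satisfy α(t) i j ≥ 0 for all t, i, j, and the balance condition ∑_{j} α(t) i j = ∑_{j} α(t) j i for every t and every i. Let x : ℝ → (Fin N → ℝ) be such that for each index i the function t ↦ x(t) i is differentiable with derivative at every t equal to ∑_{j} α(t) i j · (x(t) j − x(t) i). Then ∑_i x(t) i = ∑_i x(0) i for all t ≥ 0; consequently, if there exists x* ∈ ℝ with lim_{t→∞} x(t) i = x* for every index i, then x* = (1/N) ∑_i x(0) i. -/

import Mathlib

open Filter

/-- For balanced weights (`∑ⱼ αᵢⱼ(t) = ∑ⱼ αⱼᵢ(t)`) the state sum of the first-order consensus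
dynamics is conserved; hence if all states converge to a common value `x*`, then
`x* = (1/N) ∑ᵢ xᵢ(0)`. -/
theorem balanced_consensus_average
    (N : ℕ) (hN : 1 ≤ N)
    (α : ℝ → Fin N → Fin N → ℝ) (hα : ∀ t i j, 0 ≤ α t i j)
    (hbal : ∀ t : ℝ, ∀ i : Fin N, ∑ j, α t i j = ∑ j, α t j i)
    (x : ℝ → Fin N → ℝ)
    (hx : ∀ i : Fin N, ∀ t : ℝ,
      HasDerivAt (fun τ => x τ i) (∑ j, α t i j * (x t j - x t i)) t) :
    (∀ t : ℝ, 0 ≤ t → ∑ i, x t i = ∑ i, x 0 i) ∧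
      ∀ xstar : ℝ, (∀ i : Fin N, Tendsto (fun t => x t i) atTop (nhds xstar)) →
        xstar = (∑ i, x 0 i) / N := by
  have hsum : ∀ t : ℝ, HasDerivAt (fun τ => ∑ i, x τ i) 0 t := by
    intro t
    have h := HasDerivAt.fun_sum (fun i (_ : i ∈ Finset.univ) => hx i t)
    have hz : ∑ i, ∑ j, α t i j * (x t j - x t i) = 0 := by
      simp only [mul_sub, Finset.sum_sub_distrib]
      rw [Finset.sum_comm]
      have h1 : ∀ j : Fin N, ∑ i, α t i j * x t j = (∑ i, α t i j) * x t j := by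
        intro j; rw [Finset.sum_mul]
      have h2 : ∀ i : Fin N, ∑ j, α t i j * x t i = (∑ j, α t i j) * x t i := by
        intro i; rw [Finset.sum_mul]
      simp only [h1, h2]
      rw [sub_eq_zero]
      refine Finset.sum_congr rfl fun i _ => ?_
      rw [hbal t i]
    rwa [hz] at h
  have hconst : ∀ t : ℝ, ∑ i, x t i = ∑ i, x 0 i := by
    have := is_const_of_deriv_eq_zero (f := fun τ => ∑ i, x τ i)
      (fun t => (hsum t).differentiableAt) (fun t => (hsum t).deriv)
    intro t; exact this t 0
  refine ⟨fun t _ => hconst t, fun xstar hlim => ?_⟩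
  have h1 : Tendsto (fun t => ∑ i, x t i) atTop (nhds (∑ _i : Fin N, xstar)) :=
    tendsto_finset_sum _ fun i _ => hlim i
  have h2 : Tendsto (fun t => ∑ i, x t i) atTop (nhds (∑ i, x 0 i)) := by
    simpa only [hconst] using tendsto_const_nhds
  have heq : (∑ _i : Fin N, xstar) = ∑ i, x 0 i := tendsto_nhds_unique h1 h2
  have hN0 : (N : ℝ) ≠ 0 := Nat.cast_ne_zero.mpr (by omega)
  field_simp
  rw [← heq]
  simp [Finset.sum_const, mul_comm]
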